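/- Let $q : [0,T] \to \mathbb{R}^2$ be differentiable with $|\dot{q}_t| \leq M$ for all $t$, let $\alpha : \mathbb{R}^2 \to \mathbb{R}$ be $K$-Lipschitz satisfying $0 < \alpha_0 \leq \alpha \leq \|\alpha\|_\infty$, let $f : \mathbb{R}^2 \to \mathbb{R}$ be bounded by $\|f\|_\infty$ and $K_f$-Lipschitz, set $\beta_t = \int_0^t \alpha(q_s)\,ds$, and let $\mu > 0$. Then $\Big|\int_0^t \cos\big(\tfrac{\beta_s}{\mu}\big)\,f(q_s)\,ds\Big| \leq \Big(\pi \frac{\|f\|_\infty K + \|\alpha\|_\infty K_f}{\alpha_0^3}\,M\,\|\alpha\|_\infty\, t + \frac{2\pi \|f\|_\infty}{\alpha_0}\Big)\mu$ for all $t \in [0,T]$. -/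

import Mathlib

open Real MeasureTheory

lemma lip_continuousOn {G : ℝ → ℝ} {s : Set ℝ} {L : ℝ}
    (h : ∀ u ∈ s, ∀ v ∈ s, |G u - G v| ≤ L * |u - v|) : ContinuousOn G s := by
  have hL : LipschitzOnWith (Real.toNNReal L) G s := by
    rw [lipschitzOnWith_iff_dist_le_mul]
    intro x hx y hy
    rw [Real.dist_eq, Real.dist_eq]
    refine (h x hx y hy).trans (mul_le_mul_of_nonneg_right ?_ (abs_nonneg _))
    rw [Real.coe_toNNReal']
    exact le_max_left _ _
  exact hL.continuousOn

lemma osc_bound (μ B H L : ℝ) (hμ : 0 < μ) (hB : 0 ≤ B) (hH : 0 ≤ H) (hL : 0 ≤ L)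
    (G : ℝ → ℝ)
    (hGb : ∀ u ∈ Set.Icc (0:ℝ) B, |G u| ≤ H)
    (hGL : ∀ u ∈ Set.Icc (0:ℝ) B, ∀ v ∈ Set.Icc (0:ℝ) B, |G u - G v| ≤ L * |u - v|) :
    |∫ u in (0:ℝ)..B, Real.cos (u / μ) * G u| ≤ H * (π * μ) + L * B * (π * μ) / 2 := by
  set δ := π * μ with hδdef
  have hδ : 0 < δ := mul_pos Real.pi_pos hμ
  have hGc : ContinuousOn G (Set.Icc 0 B) := lip_continuousOn hGL
  have hcosc : Continuous fun u : ℝ => Real.cos (u / μ) :=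
    Real.continuous_cos.comp (continuous_id.div_const μ)
  have hIccuIcc : Set.Icc (0:ℝ) B = Set.uIcc 0 B := (Set.uIcc_of_le hB).symm
  have hint : ∀ a b, a ∈ Set.Icc (0:ℝ) B → b ∈ Set.Icc (0:ℝ) B →
      IntervalIntegrable (fun u => Real.cos (u / μ) * G u) volume a b := by
    intro a b ha hb
    apply ContinuousOn.intervalIntegrable
    apply (hcosc.continuousOn.mul hGc).mono
    exact Set.uIcc_subset_uIcc (by rwa [← hIccuIcc]) (by rwa [← hIccuIcc]) |>.trans
      (le_of_eq hIccuIcc.symm)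
  have babs : ∀ (x y : ℝ), |Real.cos (x / μ) * y| ≤ |y| := by
    intro x y
    rw [abs_mul]
    nlinarith [Real.abs_cos_le_one (x / μ), abs_nonneg y, abs_nonneg (Real.cos (x/μ))]
  rcases le_or_gt B δ with hc | hc
  · -- trivial bound
    have h1 := intervalIntegral.norm_integral_le_of_norm_le_const (C := H)
      (f := fun u => Real.cos (u / μ) * G u) (a := 0) (b := B) ?_
    · rw [Real.norm_eq_abs, sub_zero, abs_of_nonneg hB] at h1
      nlinarith [mul_nonneg (mul_nonneg hL hB) hδ.le, mul_nonneg hH (sub_nonneg.2 hc)]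
    · intro x hx
      rw [Set.uIoc_of_le hB] at hx
      rw [Real.norm_eq_abs]
      exact (babs x (G x)).trans (hGb x ⟨hx.1.le, hx.2⟩)
  · -- oscillatory case
    have hGc2 : ContinuousOn (fun u => G (u - δ)) (Set.Icc δ (B + δ)) := by
      apply hGc.comp (continuous_id.sub continuous_const).continuousOn
      intro x hx
      simp only [Set.mem_Icc, Pi.sub_apply, id_eq] at hx ⊢
      exact ⟨by linarith, by linarith⟩
    have hle : δ ≤ B + δ := by linarith
    have hint2 : ∀ a b, a ∈ Set.Icc δ (B + δ) → b ∈ Set.Icc δ (B + δ) →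
        IntervalIntegrable (fun u => Real.cos (u / μ) * G (u - δ)) volume a b := by
      intro a b ha hb
      apply ContinuousOn.intervalIntegrable
      apply (hcosc.continuousOn.mul hGc2).mono
      exact Set.uIcc_subset_uIcc (by rwa [Set.uIcc_of_le hle]) (by rwa [Set.uIcc_of_le hle])
        |>.trans (le_of_eq (Set.uIcc_of_le hle))
    have hdivδ : ∀ x : ℝ, (x + δ) / μ = x / μ + π := by
      intro x
      rw [add_div, hδdef, mul_div_assoc, div_self hμ.ne', mul_one]
    have hshift : (∫ u in δ..(B + δ), Real.cos (u / μ) * G (u - δ))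
        = - ∫ u in (0:ℝ)..B, Real.cos (u / μ) * G u := by
      have h1 : (∫ u in (0:ℝ)..B, Real.cos ((u + δ) / μ) * G ((u + δ) - δ))
          = ∫ u in (0+δ)..(B + δ), Real.cos (u / μ) * G (u - δ) :=
        intervalIntegral.integral_comp_add_right (f := fun u => Real.cos (u / μ) * G (u - δ)) δ
      rw [zero_add] at h1
      rw [← h1, ← intervalIntegral.integral_neg]
      apply intervalIntegral.integral_congr
      intro x _
      simp only [hdivδ, Real.cos_add_pi, add_sub_cancel_right]
      ring
    have hmemδ : δ ∈ Set.Icc (0:ℝ) B := ⟨hδ.le, hc.le⟩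
    have hmem0 : (0:ℝ) ∈ Set.Icc (0:ℝ) B := ⟨le_refl _, hB⟩
    have hmemB : B ∈ Set.Icc (0:ℝ) B := ⟨hB, le_refl _⟩
    have hmemδ' : δ ∈ Set.Icc δ (B + δ) := ⟨le_refl _, by linarith⟩
    have hmemB' : B ∈ Set.Icc δ (B + δ) := ⟨hc.le, by linarith⟩
    have hmemBδ' : B + δ ∈ Set.Icc δ (B + δ) := ⟨by linarith, le_refl _⟩
    have hsplit1 : (∫ u in (0:ℝ)..B, Real.cos (u / μ) * G u)
        = (∫ u in (0:ℝ)..δ, Real.cos (u / μ) * G u)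
          + ∫ u in δ..B, Real.cos (u / μ) * G u :=
      (intervalIntegral.integral_add_adjacent_intervals (hint 0 δ hmem0 hmemδ)
        (hint δ B hmemδ hmemB)).symm
    have hsplit2 : (∫ u in δ..(B + δ), Real.cos (u / μ) * G (u - δ))
        = (∫ u in δ..B, Real.cos (u / μ) * G (u - δ))
          + ∫ u in B..(B + δ), Real.cos (u / μ) * G (u - δ) :=
      (intervalIntegral.integral_add_adjacent_intervals (hint2 δ B hmemδ' hmemB')
        (hint2 B (B + δ) hmemB' hmemBδ')).symm
    have hdiff : (∫ u in δ..B, Real.cos (u / μ) * G u)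
        - (∫ u in δ..B, Real.cos (u / μ) * G (u - δ))
        = ∫ u in δ..B, Real.cos (u / μ) * (G u - G (u - δ)) := by
      rw [← intervalIntegral.integral_sub (hint δ B hmemδ hmemB) (hint2 δ B hmemδ' hmemB')]
      apply intervalIntegral.integral_congr
      intro x _
      ring
    -- bounds
    have b1 : |∫ u in (0:ℝ)..δ, Real.cos (u / μ) * G u| ≤ H * δ := by
      have := intervalIntegral.norm_integral_le_of_norm_le_const (C := H)
        (f := fun u => Real.cos (u / μ) * G u) (a := 0) (b := δ) ?_
      · rw [Real.norm_eq_abs, sub_zero, abs_of_nonneg hδ.le] at this; exact this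
      · intro x hx
        rw [Set.uIoc_of_le hδ.le] at hx
        rw [Real.norm_eq_abs]
        exact (babs x (G x)).trans (hGb x ⟨hx.1.le, hx.2.trans hc.le⟩)
    have b3 : |∫ u in B..(B + δ), Real.cos (u / μ) * G (u - δ)| ≤ H * δ := by
      have := intervalIntegral.norm_integral_le_of_norm_le_const (C := H)
        (f := fun u => Real.cos (u / μ) * G (u - δ)) (a := B) (b := B + δ) ?_
      · rw [Real.norm_eq_abs, show B + δ - B = δ by ring, abs_of_nonneg hδ.le] at this
        exact this
      · intro x hx
        rw [Set.uIoc_of_le (by linarith : B ≤ B + δ)] at hx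
        rw [Real.norm_eq_abs]
        exact (babs x (G (x - δ))).trans (hGb (x - δ) ⟨by linarith [hx.1], by linarith [hx.2]⟩)
    have b2 : |∫ u in δ..B, Real.cos (u / μ) * (G u - G (u - δ))| ≤ L * δ * (B - δ) := by
      have := intervalIntegral.norm_integral_le_of_norm_le_const (C := L * δ)
        (f := fun u => Real.cos (u / μ) * (G u - G (u - δ))) (a := δ) (b := B) ?_
      · rw [Real.norm_eq_abs, abs_of_nonneg (by linarith : (0:ℝ) ≤ B - δ)] at this
        exact this
      · intro x hx
        rw [Set.uIoc_of_le hc.le] at hx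
        rw [Real.norm_eq_abs]
        have h1 : |G x - G (x - δ)| ≤ L * δ := by
          have := hGL x ⟨by linarith [hx.1], hx.2⟩ (x - δ)
            ⟨by linarith [hx.1], by linarith [hx.2]⟩
          rw [show x - (x - δ) = δ by ring, abs_of_nonneg hδ.le] at this
          exact this
        exact (babs x (G x - G (x - δ))).trans h1
    -- combine
    set J := ∫ u in (0:ℝ)..B, Real.cos (u / μ) * G u with hJ
    have hJ2 : J = -((∫ u in δ..B, Real.cos (u / μ) * G (u - δ))
        + ∫ u in B..(B + δ), Real.cos (u / μ) * G (u - δ)) := by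
      rw [← hsplit2, hshift, neg_neg]
    have h2J : 2 * J = (∫ u in (0:ℝ)..δ, Real.cos (u / μ) * G u)
        + (∫ u in δ..B, Real.cos (u / μ) * (G u - G (u - δ)))
        - ∫ u in B..(B + δ), Real.cos (u / μ) * G (u - δ) := by
      rw [← hdiff]
      linarith [hsplit1, hJ2]
    have tri : ∀ X Y Z : ℝ, |X + Y - Z| ≤ |X| + |Y| + |Z| := by
      intro X Y Z
      have h1 : |X + Y - Z| ≤ |X + Y| + |Z| := by
        simpa [sub_eq_add_neg, abs_neg] using abs_add_le (X + Y) (-Z)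
      have h2 : |X + Y| ≤ |X| + |Y| := abs_add_le X Y
      linarith
    have habs : |2 * J| ≤ H * δ + L * δ * (B - δ) + H * δ := by
      rw [h2J]
      exact (tri _ _ _).trans (by linarith)
    rw [abs_mul, abs_two] at habs
    have hfin : |J| ≤ H * δ + L * δ * (B - δ) / 2 := by linarith [abs_nonneg J]
    nlinarith [mul_nonneg (mul_nonneg hL hδ.le) hδ.le]
set_option maxHeartbeats 1000000 in
/-- Riemann–Lebesgue type estimate for `∫_0^t cos(β_s/μ) f(q_s) ds`. -/
theorem oscillatory_integral_bound
    (T M α₀ A K F Kf μ : ℝ) (hT : 0 ≤ T) (hμ : 0 < μ) (hα₀ : 0 < α₀)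
    (q q' : ℝ → EuclideanSpace ℝ (Fin 2))
    (hq : ∀ t ∈ Set.Icc (0:ℝ) T, HasDerivAt q (q' t) t)
    (hq' : ∀ t ∈ Set.Icc (0:ℝ) T, ‖q' t‖ ≤ M)
    (α f : EuclideanSpace ℝ (Fin 2) → ℝ)
    (hlb : ∀ x, α₀ ≤ α x) (hub : ∀ x, α x ≤ A)
    (hαLip : ∀ x y, |α x - α y| ≤ K * ‖x - y‖)
    (hfB : ∀ x, |f x| ≤ F)
    (hfLip : ∀ x y, |f x - f y| ≤ Kf * ‖x - y‖)
    (β : ℝ → ℝ) (hβ : ∀ t, β t = ∫ s in (0:ℝ)..t, α (q s)) :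
    ∀ t ∈ Set.Icc (0:ℝ) T,
      |∫ s in (0:ℝ)..t, Real.cos (β s / μ) * f (q s)| ≤
        (π * ((F * K + A * Kf) / α₀ ^ 3) * M * A * t + 2 * π * F / α₀) * μ := by
  classical
  have hπ := Real.pi_pos
  have hA : 0 < A := lt_of_lt_of_le hα₀ ((hlb 0).trans (hub 0))
  have hF : 0 ≤ F := (abs_nonneg _).trans (hfB 0)
  have hT0 : (0:ℝ) ∈ Set.Icc (0:ℝ) T := ⟨le_refl 0, hT⟩
  have hM : 0 ≤ M := (norm_nonneg _).trans (hq' 0 hT0)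
  obtain ⟨x₀, hx₀⟩ := exists_ne (0 : EuclideanSpace ℝ (Fin 2))
  have hx₀n : 0 < ‖x₀ - 0‖ := by
    rw [sub_zero]
    exact norm_pos_iff.2 hx₀
  have hK : 0 ≤ K := by nlinarith [hαLip x₀ 0, abs_nonneg (α x₀ - α 0)]
  have hKf : 0 ≤ Kf := by nlinarith [hfLip x₀ 0, abs_nonneg (f x₀ - f 0)]
  have hαc : Continuous α := by
    have : LipschitzWith ⟨K, hK⟩ α := by
      apply LipschitzWith.of_dist_le_mul
      intro x y
      rw [Real.dist_eq, dist_eq_norm]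
      exact hαLip x y
    exact this.continuous
  have hqc : ContinuousOn q (Set.Icc 0 T) := fun s hs => (hq s hs).continuousAt.continuousWithinAt
  have hαqc : ContinuousOn (fun s => α (q s)) (Set.Icc 0 T) := hαc.comp_continuousOn hqc
  have hIccuIcc : Set.Icc (0:ℝ) T = Set.uIcc 0 T := (Set.uIcc_of_le hT).symm
  have hintg : ∀ s1 ∈ Set.Icc (0:ℝ) T, ∀ s2 ∈ Set.Icc (0:ℝ) T,
      IntervalIntegrable (fun s => α (q s)) volume s1 s2 := by
    intro s1 h1 s2 h2
    apply ContinuousOn.intervalIntegrable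
    apply hαqc.mono
    exact Set.uIcc_subset_uIcc (by rwa [← hIccuIcc]) (by rwa [← hIccuIcc]) |>.trans
      (le_of_eq hIccuIcc.symm)
  have hβ0 : β 0 = 0 := by rw [hβ]; exact intervalIntegral.integral_same
  have hβsub : ∀ s1 ∈ Set.Icc (0:ℝ) T, ∀ s2 ∈ Set.Icc (0:ℝ) T,
      β s2 - β s1 = ∫ s in s1..s2, α (q s) := by
    intro s1 h1 s2 h2
    rw [hβ s1, hβ s2]
    exact intervalIntegral.integral_interval_sub_left (hintg 0 hT0 s2 h2) (hintg 0 hT0 s1 h1)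
  have hβlow : ∀ s1 ∈ Set.Icc (0:ℝ) T, ∀ s2 ∈ Set.Icc (0:ℝ) T, s1 ≤ s2 →
      α₀ * (s2 - s1) ≤ β s2 - β s1 := by
    intro s1 h1 s2 h2 h12
    rw [hβsub s1 h1 s2 h2]
    have hmono : (∫ _ in s1..s2, α₀) ≤ ∫ s in s1..s2, α (q s) :=
      intervalIntegral.integral_mono_on h12 intervalIntegrable_const
        (hintg s1 h1 s2 h2) (fun s _ => hlb (q s))
    rw [intervalIntegral.integral_const, smul_eq_mul] at hmono
    linarith [hmono]
  have hβup : ∀ s1 ∈ Set.Icc (0:ℝ) T, ∀ s2 ∈ Set.Icc (0:ℝ) T, s1 ≤ s2 →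
      β s2 - β s1 ≤ A * (s2 - s1) := by
    intro s1 h1 s2 h2 h12
    rw [hβsub s1 h1 s2 h2]
    have hmono : (∫ s in s1..s2, α (q s)) ≤ ∫ _ in s1..s2, A :=
      intervalIntegral.integral_mono_on h12 (hintg s1 h1 s2 h2)
        intervalIntegrable_const (fun s _ => hub (q s))
    rw [intervalIntegral.integral_const, smul_eq_mul] at hmono
    linarith [hmono]
  have hqLip : ∀ s1 ∈ Set.Icc (0:ℝ) T, ∀ s2 ∈ Set.Icc (0:ℝ) T,
      ‖q s1 - q s2‖ ≤ M * |s1 - s2| := by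
    intro s1 h1 s2 h2
    have := Convex.norm_image_sub_le_of_norm_hasDerivWithin_le
      (f := q) (f' := q') (s := Set.Icc 0 T)
      (fun s hs => (hq s hs).hasDerivWithinAt) hq' (convex_Icc 0 T) h2 h1
    rwa [Real.norm_eq_abs] at this
  -- ratio Lipschitz in time
  have hratio : ∀ s1 ∈ Set.Icc (0:ℝ) T, ∀ s2 ∈ Set.Icc (0:ℝ) T,
      |f (q s1) / α (q s1) - f (q s2) / α (q s2)|
        ≤ ((F * K + A * Kf) * M / α₀ ^ 2) * |s1 - s2| := by
    intro s1 h1 s2 h2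
    have hax : 0 < α (q s1) := lt_of_lt_of_le hα₀ (hlb _)
    have hay : 0 < α (q s2) := lt_of_lt_of_le hα₀ (hlb _)
    have hxy : ‖q s1 - q s2‖ ≤ M * |s1 - s2| := hqLip s1 h1 s2 h2
    have key : f (q s1) / α (q s1) - f (q s2) / α (q s2)
        = ((f (q s1) - f (q s2)) * α (q s2) + f (q s2) * (α (q s2) - α (q s1)))
          / (α (q s1) * α (q s2)) := by
      field_simp
      ring
    rw [key, abs_div]
    have hden : α₀ ^ 2 ≤ |α (q s1) * α (q s2)| := by
      rw [abs_of_pos (mul_pos hax hay)]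
      nlinarith [hlb (q s1), hlb (q s2)]
    have hnum : |(f (q s1) - f (q s2)) * α (q s2) + f (q s2) * (α (q s2) - α (q s1))|
        ≤ (F * K + A * Kf) * ‖q s1 - q s2‖ := by
      have t1 : |(f (q s1) - f (q s2)) * α (q s2)| ≤ Kf * ‖q s1 - q s2‖ * A := by
        rw [abs_mul, abs_of_pos hay]
        have := hfLip (q s1) (q s2)
        nlinarith [abs_nonneg (f (q s1) - f (q s2)), norm_nonneg (q s1 - q s2),
          hub (q s2), hay]
      have t2 : |f (q s2) * (α (q s2) - α (q s1))| ≤ F * (K * ‖q s1 - q s2‖) := by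
        rw [abs_mul]
        have h3 : |α (q s2) - α (q s1)| ≤ K * ‖q s1 - q s2‖ := by
          have := hαLip (q s2) (q s1)
          rwa [norm_sub_rev] at this
        exact mul_le_mul (hfB _) h3 (abs_nonneg _) hF
      calc |(f (q s1) - f (q s2)) * α (q s2) + f (q s2) * (α (q s2) - α (q s1))|
          ≤ |(f (q s1) - f (q s2)) * α (q s2)| + |f (q s2) * (α (q s2) - α (q s1))| :=
            abs_add_le _ _
        _ ≤ Kf * ‖q s1 - q s2‖ * A + F * (K * ‖q s1 - q s2‖) := by linarith
        _ = (F * K + A * Kf) * ‖q s1 - q s2‖ := by ring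
    have step1 : |(f (q s1) - f (q s2)) * α (q s2) + f (q s2) * (α (q s2) - α (q s1))|
        / |α (q s1) * α (q s2)|
        ≤ ((F * K + A * Kf) * ‖q s1 - q s2‖) / α₀ ^ 2 := by
      apply div_le_div₀ (by positivity) hnum (by positivity) hden
    refine step1.trans ?_
    have hcoef : 0 ≤ F * K + A * Kf := by positivity
    have : (F * K + A * Kf) * ‖q s1 - q s2‖ ≤ (F * K + A * Kf) * (M * |s1 - s2|) :=
      mul_le_mul_of_nonneg_left hxy hcoef
    calc ((F * K + A * Kf) * ‖q s1 - q s2‖) / α₀ ^ 2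
        ≤ ((F * K + A * Kf) * (M * |s1 - s2|)) / α₀ ^ 2 :=
          (div_le_div_iff_of_pos_right (by positivity)).2 this
        _ = ((F * K + A * Kf) * M / α₀ ^ 2) * |s1 - s2| := by ring
  -- now fix t
  intro t ht
  have htT : Set.Icc (0:ℝ) t ⊆ Set.Icc (0:ℝ) T := Set.Icc_subset_Icc_right ht.2
  have htm : t ∈ Set.Icc (0:ℝ) t := ⟨ht.1, le_refl t⟩
  have h0m : (0:ℝ) ∈ Set.Icc (0:ℝ) t := ⟨le_refl 0, ht.1⟩
  have hB0 : 0 ≤ β t := by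
    have := hβlow 0 hT0 t ht ht.1
    rw [hβ0] at this
    nlinarith [mul_nonneg hα₀.le ht.1]
  have hBA : β t ≤ A * t := by
    have := hβup 0 hT0 t ht ht.1
    rw [hβ0] at this
    linarith
  have hβmem : ∀ s ∈ Set.Icc (0:ℝ) t, β s ∈ Set.Icc (0:ℝ) (β t) := by
    intro s hs
    constructor
    · have := hβlow 0 hT0 s (htT hs) hs.1
      rw [hβ0] at this
      nlinarith [mul_nonneg hα₀.le hs.1]
    · have := hβlow s (htT hs) t ht hs.2
      nlinarith [mul_nonneg hα₀.le (sub_nonneg.2 hs.2)]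
  have hβLipt : ∀ u ∈ Set.Icc (0:ℝ) t, ∀ v ∈ Set.Icc (0:ℝ) t, |β u - β v| ≤ A * |u - v| := by
    intro u hu v hv
    rcases le_total u v with h | h
    · have h1 := hβup u (htT hu) v (htT hv) h
      have h2 := hβlow u (htT hu) v (htT hv) h
      rw [abs_sub_comm, abs_of_nonneg (by nlinarith [mul_nonneg hα₀.le (sub_nonneg.2 h)]),
        abs_sub_comm u v, abs_of_nonneg (sub_nonneg.2 h)]
      linarith
    · have h1 := hβup v (htT hv) u (htT hu) h
      have h2 := hβlow v (htT hv) u (htT hu) h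
      rw [abs_of_nonneg (by nlinarith [mul_nonneg hα₀.le (sub_nonneg.2 h)]),
        abs_of_nonneg (sub_nonneg.2 h)]
      linarith
  have hβcont : ContinuousOn β (Set.Icc 0 t) := lip_continuousOn hβLipt
  have hsurj : ∀ u ∈ Set.Icc (0:ℝ) (β t), ∃ s ∈ Set.Icc (0:ℝ) t, β s = u := by
    intro u hu
    have him := intermediate_value_Icc ht.1 hβcont
    have hm : u ∈ Set.Icc (β 0) (β t) := by rw [hβ0]; exact hu
    obtain ⟨s, hs, hsu⟩ := him hm
    exact ⟨s, hs, hsu⟩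
  have hinj : ∀ s1 ∈ Set.Icc (0:ℝ) t, ∀ s2 ∈ Set.Icc (0:ℝ) t, β s1 = β s2 → s1 = s2 := by
    intro s1 h1 s2 h2 he
    by_contra hne
    rcases lt_or_gt_of_ne hne with h | h
    · have := hβlow s1 (htT h1) s2 (htT h2) h.le
      nlinarith
    · have := hβlow s2 (htT h2) s1 (htT h1) h.le
      nlinarith
  set τ : ℝ → ℝ := fun u => if h : ∃ s ∈ Set.Icc (0:ℝ) t, β s = u then h.choose else 0
    with hτdef
  have hτ : ∀ u ∈ Set.Icc (0:ℝ) (β t), τ u ∈ Set.Icc (0:ℝ) t ∧ β (τ u) = u := by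
    intro u hu
    have h := hsurj u hu
    rw [hτdef]
    simp only [dif_pos h]
    exact ⟨h.choose_spec.1, h.choose_spec.2⟩
  set G : ℝ → ℝ := fun u => f (q (τ u)) / α (q (τ u)) with hGdef
  have hGb : ∀ u ∈ Set.Icc (0:ℝ) (β t), |G u| ≤ F / α₀ := by
    intro u hu
    rw [hGdef]
    simp only
    rw [abs_div, abs_of_pos (lt_of_lt_of_le hα₀ (hlb _))]
    exact div_le_div₀ hF (hfB _) hα₀ (hlb _)
  have hGL : ∀ u ∈ Set.Icc (0:ℝ) (β t), ∀ v ∈ Set.Icc (0:ℝ) (β t),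
      |G u - G v| ≤ ((F * K + A * Kf) * M / α₀ ^ 3) * |u - v| := by
    intro u hu v hv
    obtain ⟨hτu, hβτu⟩ := hτ u hu
    obtain ⟨hτv, hβτv⟩ := hτ v hv
    have hτLip : α₀ * |τ u - τ v| ≤ |u - v| := by
      rcases le_total (τ u) (τ v) with h | h
      · have hl := hβlow (τ u) (htT hτu) (τ v) (htT hτv) h
        rw [hβτu, hβτv] at hl
        have hvu : 0 ≤ v - u := le_trans (mul_nonneg hα₀.le (by linarith)) hl
        rw [abs_of_nonpos (by linarith : τ u - τ v ≤ 0), abs_sub_comm,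
          abs_of_nonneg hvu]
        linarith
      · have hl := hβlow (τ v) (htT hτv) (τ u) (htT hτu) h
        rw [hβτu, hβτv] at hl
        have huv : 0 ≤ u - v := le_trans (mul_nonneg hα₀.le (by linarith)) hl
        rw [abs_of_nonneg (by linarith : 0 ≤ τ u - τ v), abs_of_nonneg huv]
        linarith
    have hr := hratio (τ u) (htT hτu) (τ v) (htT hτv)
    have h2 : |τ u - τ v| ≤ |u - v| / α₀ := by
      rw [le_div_iff₀ hα₀]
      linarith
    have hLs0 : 0 ≤ (F * K + A * Kf) * M / α₀ ^ 2 := by positivity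
    calc |G u - G v| ≤ ((F * K + A * Kf) * M / α₀ ^ 2) * |τ u - τ v| := hr
      _ ≤ ((F * K + A * Kf) * M / α₀ ^ 2) * (|u - v| / α₀) :=
          mul_le_mul_of_nonneg_left h2 hLs0
      _ = ((F * K + A * Kf) * M / α₀ ^ 3) * |u - v| := by
          rw [div_mul_div_comm, ← pow_succ, div_mul_eq_mul_div]
  -- substitution u = β s
  have huIcct : Set.uIcc (0:ℝ) t = Set.Icc 0 t := Set.uIcc_of_le ht.1
  have hsub : (∫ s in (0:ℝ)..t, Real.cos (β s / μ) * f (q s))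
      = ∫ u in (0:ℝ)..(β t), Real.cos (u / μ) * G u := by
    have hg : ContinuousOn (fun u => Real.cos (u / μ) * G u) (β '' Set.uIcc 0 t) := by
      apply ContinuousOn.mono (s := Set.Icc 0 (β t))
      · exact ((Real.continuous_cos.comp (continuous_id.div_const μ)).continuousOn).mul
          (lip_continuousOn hGL)
      · rintro _ ⟨s, hs, rfl⟩
        exact hβmem s (huIcct ▸ hs)
    have hder : ∀ x ∈ Set.Ioo (min 0 t) (max 0 t),
        HasDerivWithinAt β (α (q x)) (Set.Ioi x) x := by
      intro x hx
      rw [min_eq_left ht.1, max_eq_right ht.1] at hx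
      have hxT : x ∈ Set.Ioo (0:ℝ) T := ⟨hx.1, lt_of_lt_of_le hx.2 ht.2⟩
      have hxIcc : x ∈ Set.Icc (0:ℝ) T := Set.Ioo_subset_Icc_self hxT
      have hmeas : StronglyMeasurableAtFilter (fun s => α (q s)) (nhds x) volume :=
        ⟨Set.Ioo 0 T, Ioo_mem_nhds hxT.1 hxT.2,
          (hαqc.mono Set.Ioo_subset_Icc_self).aestronglyMeasurable measurableSet_Ioo⟩
      have hca : ContinuousAt (fun s => α (q s)) x :=
        hαc.continuousAt.comp (hq x hxIcc).continuousAt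
      have hd : HasDerivAt (fun u => ∫ s in (0:ℝ)..u, α (q s)) (α (q x)) x :=
        intervalIntegral.integral_hasDerivAt_right (hintg 0 hT0 x hxIcc) hmeas hca
      have hfun : β = fun u => ∫ s in (0:ℝ)..u, α (q s) := funext hβ
      rw [hfun]
      exact hd.hasDerivWithinAt
    have hsubst := intervalIntegral.integral_comp_smul_deriv'' (a := 0) (b := t)
      (f := β) (f' := fun s => α (q s)) (g := fun u => Real.cos (u / μ) * G u)
      (by rwa [huIcct]) hder
      (by rw [huIcct]; exact hαqc.mono htT) hg
    rw [hβ0] at hsubst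
    rw [← hsubst]
    apply intervalIntegral.integral_congr
    intro x hx
    have hxm : x ∈ Set.Icc 0 t := huIcct ▸ hx
    have hGβ : G (β x) = f (q x) / α (q x) := by
      obtain ⟨hτm, hτβ⟩ := hτ (β x) (hβmem x hxm)
      have : τ (β x) = x := hinj _ hτm _ hxm hτβ
      rw [hGdef]
      simp only
      rw [this]
    have hαx : α (q x) ≠ 0 := ne_of_gt (lt_of_lt_of_le hα₀ (hlb _))
    show Real.cos (β x / μ) * f (q x)
        = α (q x) • ((fun u => Real.cos (u / μ) * G u) ∘ β) x
    simp only [Function.comp_apply, smul_eq_mul, hGβ]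
    rw [mul_comm (α (q x)), mul_assoc, div_mul_cancel₀ _ hαx]
  rw [hsub]
  have hosc := osc_bound μ (β t) (F / α₀) ((F * K + A * Kf) * M / α₀ ^ 3) hμ hB0
    (by positivity) (by positivity) G hGb hGL
  refine hosc.trans ?_
  have hc1 : ((F * K + A * Kf) * M / α₀ ^ 3) * (β t) * (π * μ) / 2
      ≤ ((F * K + A * Kf) * M / α₀ ^ 3) * (A * t) * (π * μ) := by
    have hX : 0 ≤ (F * K + A * Kf) * M / α₀ ^ 3 := by positivity
    have h1 : ((F * K + A * Kf) * M / α₀ ^ 3) * (β t) * (π * μ)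
        ≤ ((F * K + A * Kf) * M / α₀ ^ 3) * (A * t) * (π * μ) :=
      mul_le_mul_of_nonneg_right (mul_le_mul_of_nonneg_left hBA hX) (mul_pos hπ hμ).le
    have h2 : 0 ≤ ((F * K + A * Kf) * M / α₀ ^ 3) * (β t) * (π * μ) :=
      mul_nonneg (mul_nonneg hX hB0) (mul_pos hπ hμ).le
    linarith
  have hc2 : (F / α₀) * (π * μ) ≤ 2 * π * F / α₀ * μ := by
    have : 0 ≤ F / α₀ * (π * μ) := by positivity
    have heq : 2 * π * F / α₀ * μ = 2 * ((F / α₀) * (π * μ)) := by ring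
    linarith [heq]
  have heq2 : π * ((F * K + A * Kf) / α₀ ^ 3) * M * A * t * μ
      = ((F * K + A * Kf) * M / α₀ ^ 3) * (A * t) * (π * μ) := by ring
  have hrhs : (π * ((F * K + A * Kf) / α₀ ^ 3) * M * A * t + 2 * π * F / α₀) * μ
      = π * ((F * K + A * Kf) / α₀ ^ 3) * M * A * t * μ + 2 * π * F / α₀ * μ := by ring
  rw [hrhs, heq2]
  linarith
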